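/- Let n ≥ 1 and let F, G be n × n matrices over ℚ with F G = G F. Assume that the characteristic polynomial of F is irreducible in ℚ[t]. Then there exists a polynomial φ(t) ∈ ℚ[t] of degree at most n − 1 such that G = φ(F). -/

import Mathlib

/-- If `F` and `G` are commuting `n × n` rational matrices and the characteristic
polynomial of `F` is irreducible over `ℚ`, then `G` is a polynomial in `F` of degree
at most `n - 1`. -/
theorem commuting_matrix_is_polynomial_in_matrix
    (n : ℕ) (hn : 1 ≤ n)
    (F G : Matrix (Fin n) (Fin n) ℚ)
    (hcomm : F * G = G * F)
    (hirr : Irreducible F.charpoly) :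
    ∃ φ : Polynomial ℚ, φ.natDegree ≤ n - 1 ∧ Polynomial.aeval F φ = G := by
  classical
  set χ := F.charpoly with hχ
  have hχdeg : χ.degree = (n : WithBot ℕ) := by
    rw [hχ, Matrix.charpoly_degree_eq_dim, Fintype.card_fin]
  -- commuting lemma
  have hcom : ∀ p : Polynomial ℚ, Commute (Polynomial.aeval F p) G := by
    intro p
    rw [Polynomial.aeval_eq_sum_range]
    have hFG : Commute F G := hcomm
    exact Commute.sum_left _ _ _ fun i _ =>
      (hFG.pow_left i).smul_left _
  -- the nonzero vector
  set v : Fin n → ℚ := Pi.single ⟨0, hn⟩ 1 with hv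
  have hv0 : v ≠ 0 := by
    intro h
    have := congrFun h ⟨0, hn⟩
    simp [hv, Pi.single_eq_same] at this
  -- the annihilator ideal of v
  set I : Ideal (Polynomial ℚ) :=
    { carrier := {p | (Polynomial.aeval F p).mulVec v = 0}
      add_mem' := by
        intro a b ha hb
        simp only [Set.mem_setOf_eq, map_add, Matrix.add_mulVec] at *
        rw [ha, hb, add_zero]
      zero_mem' := by simp
      smul_mem' := by
        intro c x hx
        simp only [Set.mem_setOf_eq, smul_eq_mul, map_mul,
          ← Matrix.mulVec_mulVec] at *
        rw [hx, Matrix.mulVec_zero] } with hI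
  have hχI : χ ∈ I := by
    show (Polynomial.aeval F χ).mulVec v = 0
    rw [hχ, Matrix.aeval_self_charpoly, Matrix.zero_mulVec]
  have h1I : (1 : Polynomial ℚ) ∉ I := by
    intro h
    have : (Polynomial.aeval F (1 : Polynomial ℚ)).mulVec v = 0 := h
    simp only [map_one, Matrix.one_mulVec] at this
    exact hv0 this
  -- I = span {χ}
  obtain ⟨d, hdI⟩ := (IsPrincipalIdealRing.principal I).principal
  rw [Ideal.submodule_span_eq] at hdI
  have hdvd : d ∣ χ := by
    rw [← Ideal.mem_span_singleton, ← hdI]; exact hχI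
  obtain ⟨c, hc⟩ := hdvd
  have hdu : ¬ IsUnit d := by
    intro hu
    apply h1I
    rw [hdI, Ideal.span_singleton_eq_top.mpr hu]
    trivial
  have hcu : IsUnit c := (hirr.isUnit_or_isUnit hc).resolve_left hdu
  have hIχ : I = Ideal.span {χ} := by
    rw [hdI]
    exact Ideal.span_singleton_eq_span_singleton.mpr ⟨hcu.unit, hc.symm⟩
  -- the linear map  (Fin n → ℚ) → (Fin n → ℚ)
  let S : Polynomial ℚ →ₗ[ℚ] (Fin n → ℚ) :=
    { toFun := fun p => (Polynomial.aeval F p).mulVec v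
      map_add' := by intro a b; simp [Matrix.add_mulVec]
      map_smul' := by intro c x; simp [Matrix.smul_mulVec] }
  let E := Polynomial.degreeLTEquiv ℚ n
  let T : (Fin n → ℚ) →ₗ[ℚ] (Fin n → ℚ) :=
    S.comp ((Polynomial.degreeLT ℚ n).subtype.comp E.symm.toLinearMap)
  have hTinj : Function.Injective T := by
    rw [← LinearMap.ker_eq_bot]
    rw [LinearMap.ker_eq_bot']
    intro x hx
    set p : Polynomial ℚ := (E.symm x : Polynomial ℚ) with hp
    have hpI : p ∈ I := hx
    have hpd : p ∈ Polynomial.degreeLT ℚ n := (E.symm x).2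
    rw [Polynomial.mem_degreeLT] at hpd
    have hp0 : p = 0 := by
      rw [hIχ, Ideal.mem_span_singleton] at hpI
      exact Polynomial.eq_zero_of_dvd_of_degree_lt hpI (hχdeg ▸ hpd)
    have : E.symm x = 0 := Subtype.ext hp0
    have := congrArg E this
    simpa using this
  have hTsurj : Function.Surjective T :=
    LinearMap.injective_iff_surjective.mp hTinj
  -- get φ
  obtain ⟨y, hy⟩ := hTsurj (G.mulVec v)
  set φ : Polynomial ℚ := (E.symm y : Polynomial ℚ) with hφ
  have hφd : φ.degree < n := Polynomial.mem_degreeLT.mp (E.symm y).2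
  have hφv : (Polynomial.aeval F φ).mulVec v = G.mulVec v := hy
  refine ⟨φ, ?_, ?_⟩
  · rcases eq_or_ne φ 0 with h0 | h0
    · simp [h0]
    · have := (Polynomial.natDegree_lt_iff_degree_lt h0).mpr hφd
      omega
  · -- show agreement on all vectors
    have key : ∀ w : Fin n → ℚ,
        (Polynomial.aeval F φ).mulVec w = G.mulVec w := by
      intro w
      obtain ⟨z, hz⟩ := hTsurj w
      set ψ : Polynomial ℚ := (E.symm z : Polynomial ℚ) with hψ
      have hψv : (Polynomial.aeval F ψ).mulVec v = w := hz
      calc (Polynomial.aeval F φ).mulVec w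
          = (Polynomial.aeval F φ).mulVec ((Polynomial.aeval F ψ).mulVec v) := by
            rw [hψv]
        _ = (Polynomial.aeval F φ * Polynomial.aeval F ψ).mulVec v := by
            rw [Matrix.mulVec_mulVec]
        _ = (Polynomial.aeval F ψ * Polynomial.aeval F φ).mulVec v := by
            rw [← map_mul, ← map_mul, mul_comm φ ψ]
        _ = (Polynomial.aeval F ψ).mulVec ((Polynomial.aeval F φ).mulVec v) := by
            rw [Matrix.mulVec_mulVec]
        _ = (Polynomial.aeval F ψ).mulVec (G.mulVec v) := by rw [hφv]
        _ = (Polynomial.aeval F ψ * G).mulVec v := by rw [Matrix.mulVec_mulVec]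
        _ = (G * Polynomial.aeval F ψ).mulVec v := by rw [hcom ψ]
        _ = G.mulVec ((Polynomial.aeval F ψ).mulVec v) := by
            rw [Matrix.mulVec_mulVec]
        _ = G.mulVec w := by rw [hψv]
    ext i j
    have := congrFun (key (Pi.single j 1)) i
    simpa [Matrix.mulVec_single] using this
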